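/- Let ψ be a CNF formula with variables x1, …, xn and clauses c1, …, cm, and let A(ψ) be the Eppstein automaton of ψ. For every truth assignment τ : {x1, …, xn} → {0, 1} and every i with 1 ≤ i ≤ m, the assignment τ makes the clause c_i true if and only if the word a1 a2 ⋯ an of length n defined by a_j = a if τ(x_j) = 1 and a_j = b if τ(x_j) = 0 sends all of the states q_{i,1}, …, q_{i,n+1} of A(ψ) to the state z. -/

import Mathlib

/-- Apply a word (list of letters) to a state of a DFA with transition function `δ`. -/
def applyWord {Q A : Type*} (δ : Q → A → Q) (q : Q) : List A → Q
  | [] => q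
  | a :: w => applyWord δ (δ q a) w

/-- The history (list) of letters played after `n` moves of the synchronization game,
when Alice uses strategy `σA` and Bob uses strategy `σB`; Alice moves first, i.e.
the letters at even indices are chosen by Alice and those at odd indices by Bob. -/
def playHist {A : Type*} (σA σB : List A → A) : ℕ → List A
  | 0 => []
  | n + 1 =>
      let h := playHist σA σB n
      h ++ [if n % 2 = 0 then σA h else σB h]

/-- `w` synchronizes the position `P` (a set of states holding coins) to a single state. -/
def IsResetFrom {Q A : Type*} [DecidableEq Q] (δ : Q → A → Q) (P : Finset Q)
    (w : List A) : Prop :=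
  (P.image fun q => applyWord δ q w).card = 1

/-- Alice has a winning strategy in the synchronization game starting from position `P`. -/
def AliceWins {Q A : Type*} [DecidableEq Q] (δ : Q → A → Q) (P : Finset Q) : Prop :=
  ∃ σA : List A → A, ∀ σB : List A → A, ∃ k : ℕ,
    IsResetFrom δ P (playHist σA σB k)

/-- Alice has a strategy in the synchronization game starting from position `P` that
guarantees reaching a singleton position in a play in which Alice has chosen at most
`m` letters (after `k` letters in total, Alice has chosen `(k + 1) / 2` of them). -/
def AliceWinsWithin {Q A : Type*} [DecidableEq Q] (δ : Q → A → Q) (P : Finset Q)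
    (m : ℕ) : Prop :=
  ∃ σA : List A → A, ∀ σB : List A → A, ∃ k : ℕ,
    IsResetFrom δ P (playHist σA σB k) ∧ (k + 1) / 2 ≤ m

/-- Bob has a winning strategy in the synchronization game starting from position `P`:
against every strategy of Alice the position never becomes a singleton. -/
def BobWins {Q A : Type*} [DecidableEq Q] (δ : Q → A → Q) (P : Finset Q) : Prop :=
  ∃ σB : List A → A, ∀ σA : List A → A, ∀ k : ℕ,
    ¬ IsResetFrom δ P (playHist σA σB k)

/-- The Eppstein automaton `A(ψ)` of a CNF formula `ψ` with `n` variables and `m` clauses.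
The clause `c_i` contains the literal `x_j` iff `pos i j = true` and the literal `¬x_j`
iff `neg i j = true`. States: `Sum.inl (i, j)` is the state `q_{i,j+1}` (so `j : Fin (n+1)`
ranges over the `0`-based versions of the indices `1, …, n+1`) and `Sum.inr ()` is the
state `z`. The alphabet is `Bool`, with `true` for the letter `a` and `false` for `b`. -/
def eppstein {n m : ℕ} (pos neg : Fin m → Fin n → Bool) :
    (Fin m × Fin (n + 1)) ⊕ Unit → Bool → (Fin m × Fin (n + 1)) ⊕ Unit
  | Sum.inr _, _ => Sum.inr ()
  | Sum.inl (i, j), c =>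
      if h : (j : ℕ) < n then
        if (if c then pos i ⟨j, h⟩ else neg i ⟨j, h⟩) = true then Sum.inr ()
        else Sum.inl (i, ⟨(j : ℕ) + 1, by omega⟩)
      else Sum.inr ()

/-- A truth assignment `τ` makes the clause `c_i` of a CNF formula true if and only if the
word `a_1 ⋯ a_n` (where `a_j` is the letter `a`, i.e. `true`, if `τ(x_j) = 1` and the
letter `b`, i.e. `false`, if `τ(x_j) = 0`) sends all of the states `q_{i,1}, …, q_{i,n+1}`
of the Eppstein automaton to the state `z`. -/

lemma applyWord_eppstein_z {n m : ℕ} (pos neg : Fin m → Fin n → Bool) (w : List Bool) :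
    applyWord (eppstein pos neg) (Sum.inr ()) w = Sum.inr () := by
  induction w with
  | nil => rfl
  | cons c w ih => simpa [applyWord, eppstein] using ih

lemma applyWord_eppstein_overflow {n m : ℕ} (pos neg : Fin m → Fin n → Bool) (i : Fin m) :
    ∀ (w : List Bool) (j : Fin (n + 1)), n < (j : ℕ) + w.length →
      applyWord (eppstein pos neg) (Sum.inl (i, j)) w = Sum.inr () := by
  intro w
  induction w with
  | nil =>
    intro j hj
    simp at hj
    have := j.isLt
    omega
  | cons c w ih =>
    intro j hj
    show applyWord (eppstein pos neg) (eppstein pos neg (Sum.inl (i, j)) c) w = Sum.inr ()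
    rw [eppstein]
    by_cases h : (j : ℕ) < n
    · rw [dif_pos h]
      by_cases hk : (if c then pos i ⟨j, h⟩ else neg i ⟨j, h⟩) = true
      · rw [if_pos hk]; exact applyWord_eppstein_z pos neg w
      · rw [if_neg hk]
        exact ih ⟨(j : ℕ) + 1, by omega⟩ (by simp at hj ⊢; omega)
    · rw [dif_neg h]; exact applyWord_eppstein_z pos neg w

lemma applyWord_eppstein_key {n m : ℕ} (pos neg : Fin m → Fin n → Bool) (i : Fin m)
    (τ : Fin n → Bool) :
    ∀ (w : List Bool) (j : ℕ) (hj : j + w.length ≤ n)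
      (hw : ∀ t (ht : t < w.length), w[t] = τ ⟨j + t, by omega⟩),
      (applyWord (eppstein pos neg) (Sum.inl (i, ⟨j, by omega⟩)) w = Sum.inr () ↔
        ∃ t : Fin n, j ≤ (t : ℕ) ∧ (t : ℕ) < j + w.length ∧
          ((pos i t = true ∧ τ t = true) ∨ (neg i t = true ∧ τ t = false))) := by
  intro w
  induction w with
  | nil =>
    intro j hj hw
    constructor
    · intro h; exact absurd h (by simp [applyWord])
    · rintro ⟨t, h1, h2, _⟩; simp at h2; omega
  | cons c w ih =>
    intro j hj hw
    have hjn : j < n := by simp at hj; omega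
    have hc : c = τ ⟨j, hjn⟩ := by exact hw 0 (by simp)
    show applyWord (eppstein pos neg) (eppstein pos neg (Sum.inl (i, ⟨j, by omega⟩)) c) w
        = Sum.inr () ↔ _
    rw [eppstein, dif_pos hjn]
    by_cases hk : (if c then pos i ⟨j, hjn⟩ else neg i ⟨j, hjn⟩) = true
    · rw [if_pos hk]
      simp only [applyWord_eppstein_z, true_iff]
      refine ⟨⟨j, hjn⟩, le_refl _, ?_, ?_⟩
      · simp only [Fin.val_mk, List.length_cons]; omega
      · cases hcc : c with
        | false => right; rw [hcc] at hk hc; simp at hk; exact ⟨hk, hc.symm⟩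
        | true => left; rw [hcc] at hk hc; simp at hk; exact ⟨hk, hc.symm⟩
    · rw [if_neg hk]
      have hw' : ∀ t (ht : t < w.length),
          w[t] = τ ⟨(j + 1) + t, by simp at hj; omega⟩ := by
        intro t ht
        have := hw (t + 1) (by simp; omega)
        simpa [add_assoc, add_comm 1 t] using this
      rw [ih (j + 1) (by simp at hj ⊢; omega) hw']
      constructor
      · rintro ⟨t, h1, h2, h3⟩
        exact ⟨t, by omega, by simp at h2 ⊢; omega, h3⟩
      · rintro ⟨t, h1, h2, h3⟩
        refine ⟨t, ?_, by simp at h2 ⊢; omega, h3⟩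
        rcases Nat.lt_or_ge j t with h | h
        · omega
        · exfalso
          have : (⟨j, hjn⟩ : Fin n) = t := by ext; simp; omega
          rw [← this] at h3
          cases hcc : c with
          | true =>
            rw [hcc] at hk hc; simp at hk
            rcases h3 with ⟨h4, _⟩ | ⟨_, h4⟩
            · rw [h4] at hk; simp at hk
            · rw [← hc] at h4; simp at h4
          | false =>
            rw [hcc] at hk hc; simp at hk
            rcases h3 with ⟨_, h4⟩ | ⟨h4, _⟩
            · rw [← hc] at h4; simp at h4
            · rw [h4] at hk; simp at hk

/-- A truth assignment `τ` makes the clause `c_i` of a CNF formula true if and only if the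
word `a_1 ⋯ a_n` (where `a_j` is the letter `a`, i.e. `true`, if `τ(x_j) = 1` and the
letter `b`, i.e. `false`, if `τ(x_j) = 0`) sends all of the states `q_{i,1}, …, q_{i,n+1}`
of the Eppstein automaton to the state `z`. -/
theorem eppstein_clause_true_iff (n m : ℕ) (pos neg : Fin m → Fin n → Bool)
    (τ : Fin n → Bool) (i : Fin m) :
    (∃ j : Fin n, (pos i j = true ∧ τ j = true) ∨ (neg i j = true ∧ τ j = false)) ↔
      ∀ j : Fin (n + 1),
        applyWord (eppstein pos neg) (Sum.inl (i, j)) (List.ofFn τ) = Sum.inr () := by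
  have key := applyWord_eppstein_key pos neg i τ (List.ofFn τ) 0 (by simp)
    (by intro t ht; simp)
  constructor
  · intro ⟨t, ht⟩ j
    by_cases hj0 : (j : ℕ) = 0
    · have h0 : j = ⟨0, by omega⟩ := by ext; simpa using hj0
      rw [h0]
      apply key.2
      exact ⟨t, Nat.zero_le _, by simpa using t.isLt, ht⟩
    · exact applyWord_eppstein_overflow pos neg i _ j (by rw [List.length_ofFn]; omega)
  · intro h
    obtain ⟨t, _, _, ht⟩ := key.1 (h ⟨0, by omega⟩)
    exact ⟨t, ht⟩
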